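/- Under the conditions of the insertion characterisation (root of T mixed and G+x a cograph), the mixed node u of T all of whose children are uniform and whose 'outside' adjacencies match series ancestors is unique. -/

import Mathlib

universe u

def IsCograph {α : Type*} (G : SimpleGraph α) : Prop :=
  ¬ ∃ f : Fin 4 → α, Function.Injective f ∧
      ∀ i j : Fin 4, G.Adj (f i) (f j) ↔ (i.val + 1 = j.val ∨ j.val + 1 = i.val)

inductive Cotree (V : Type u) : Type u where
  | leaf : V → Cotree V
  | node : Bool → List (Cotree V) → Cotree V

namespace Cotree

variable {V : Type u}

def leaves : Cotree V → List V
  | .leaf v => [v]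
  | .node _ ts => ts.attach.flatMap (fun t => t.1.leaves)

decreasing_by simp_wf; have := List.sizeOf_lt_of_mem t.2; omega

def subtrees : Cotree V → List (Cotree V)
  | .leaf v => [.leaf v]
  | .node b ts => .node b ts :: ts.attach.flatMap (fun t => t.1.subtrees)

decreasing_by simp_wf; have := List.sizeOf_lt_of_mem t.2; omega

def children : Cotree V → List (Cotree V)
  | .leaf _ => []
  | .node _ ts => ts

def isSeries : Cotree V → Prop
  | .node true _ => True
  | _ => False

def isParallel : Cotree V → Prop
  | .node false _ => True
  | _ => False

def adj : Cotree V → V → V → Prop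
  | .leaf _, _, _ => False
  | .node b ts, x, y =>
      (∃ t ∈ ts.attach, adj t.1 x y) ∨
      (b = true ∧ ∃ t ∈ ts.attach, ∃ s ∈ ts.attach,
        t.1 ≠ s.1 ∧ x ∈ t.1.leaves ∧ y ∈ s.1.leaves)

decreasing_by simp_wf; have := List.sizeOf_lt_of_mem t.2; omega

def valid : Cotree V → Prop
  | .leaf _ => True
  | .node b ts => 2 ≤ ts.length ∧ ∀ t ∈ ts.attach, valid t.1 ∧
      ∀ b' ts', t.1 = .node b' ts' → b' ≠ b

decreasing_by simp_wf; have := List.sizeOf_lt_of_mem t.2; omega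

def hollow (N : Set V) (t : Cotree V) : Prop := ∀ v ∈ t.leaves, v ∉ N
def full (N : Set V) (t : Cotree V) : Prop := ∀ v ∈ t.leaves, v ∈ N
def uniform (N : Set V) (t : Cotree V) : Prop := full N t ∨ hollow N t
def mixed (N : Set V) (t : Cotree V) : Prop := ¬ uniform N t

def forced (N : Set V) : Cotree V → Prop
  | .leaf v => v ∈ N
  | .node b ts =>
      full N (.node b ts) ∨
      (b = false ∧ ∀ t ∈ ts, ¬ hollow N t) ∨
      (b = true ∧ ∀ t ∈ ts.attach, forced N t.1)

decreasing_by simp_wf; have := List.sizeOf_lt_of_mem t.2; omega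

def eligible (N : Set V) : Cotree V → Cotree V → Prop
  | .leaf v, u => u = .leaf v
  | .node b ts, u => u = .node b ts ∨
      ∃ t ∈ ts.attach, eligible N t.1 u ∧
        (b = false → ∀ s ∈ ts, s ≠ t.1 → hollow N s)

decreasing_by simp_wf; have := List.sizeOf_lt_of_mem t.2; omega

def IsLcaLeaves (T u : Cotree V) (x y : V) : Prop :=
  u ∈ T.subtrees ∧ x ∈ u.leaves ∧ y ∈ u.leaves ∧
    ∀ c ∈ u.children, ¬ (x ∈ c.leaves ∧ y ∈ c.leaves)

def IsLcaNodeLeaf (T w u : Cotree V) (y : V) : Prop :=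
  w ∈ T.subtrees ∧ u ∈ w.subtrees ∧ y ∈ w.leaves ∧
    ∀ c ∈ w.children, ¬ (u ∈ c.subtrees ∧ y ∈ c.leaves)

def graphOf (T : Cotree V) : SimpleGraph V :=
  SimpleGraph.fromRel (fun a b => T.adj a b)

def graphPlus (T : Cotree V) (N : Set V) : SimpleGraph (Option V) :=
  SimpleGraph.fromRel (fun a b =>
    match a, b with
    | some u, some v => T.adj u v
    | none, some v => v ∈ N
    | _, _ => False)

def IsConstrainedCompletion (T : Cotree V) (Nx N' : Set V) : Prop :=
  Nx ⊆ N' ∧ (∀ v ∈ N', v ∈ T.leaves) ∧ IsCograph (graphPlus T N')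

def IsMinimalConstrainedCompletion (T : Cotree V) (Nx N' : Set V) : Prop :=
  IsConstrainedCompletion T Nx N' ∧
    ∀ N'' ⊆ N', IsConstrainedCompletion T Nx N'' → N'' = N'

def IsInsertionNode (T : Cotree V) (N' : Set V) (u : Cotree V) : Prop :=
  u ∈ T.subtrees ∧ mixed N' u ∧ (∀ c ∈ u.children, uniform N' c) ∧
    ∀ y ∈ T.leaves, y ∉ u.leaves →
      (y ∈ N' ↔ ∃ w, IsLcaNodeLeaf T w u y ∧ w.isSeries)

def IsCMInsertionNode (T : Cotree V) (Nx : Set V) (u : Cotree V) : Prop :=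
  ∃ N', IsMinimalConstrainedCompletion T Nx N' ∧ IsInsertionNode T N' u

def anchored (T u : Cotree V) (Nx : Set V) : Set V :=
  Nx ∪ {y | y ∈ T.leaves ∧ y ∉ u.leaves ∧ ∃ w, IsLcaNodeLeaf T w u y ∧ w.isSeries}
     ∪ {y | ∃ c ∈ u.children, ¬ hollow Nx c ∧ y ∈ c.leaves}

end Cotree
namespace Cotree
variable {V : Type u}

theorem leaves_node_eq {b : Bool} {ts : List (Cotree V)} :
    (Cotree.node b ts).leaves = ts.flatMap leaves := by
  rw [leaves]; simp [List.flatMap_subtype]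

theorem mem_leaves_node {x : V} {b : Bool} {ts : List (Cotree V)} :
    x ∈ (Cotree.node b ts).leaves ↔ ∃ c ∈ ts, x ∈ c.leaves := by
  rw [leaves_node_eq]; simp

theorem mem_subtrees_node {u : Cotree V} {b : Bool} {ts : List (Cotree V)} :
    u ∈ (Cotree.node b ts).subtrees ↔ u = Cotree.node b ts ∨ ∃ c ∈ ts, u ∈ c.subtrees := by
  rw [subtrees]
  simp [List.flatMap_subtype]

theorem mem_subtrees_leaf {u : Cotree V} {v : V} :
    u ∈ (Cotree.leaf v : Cotree V).subtrees ↔ u = Cotree.leaf v := by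
  rw [subtrees]; simp

theorem mem_subtrees_self (t : Cotree V) : t ∈ t.subtrees := by
  cases t with
  | leaf v => simp [mem_subtrees_leaf]
  | node b ts => simp [mem_subtrees_node]

theorem leaves_subset : ∀ (t u : Cotree V), u ∈ t.subtrees → ∀ x ∈ u.leaves, x ∈ t.leaves
  | .leaf v, u, hu, x, hx => by rw [mem_subtrees_leaf] at hu; subst hu; exact hx
  | .node b ts, u, hu, x, hx => by
      rw [mem_subtrees_node] at hu
      rcases hu with rfl | ⟨c, hc, huc⟩
      · exact hx
      · exact mem_leaves_node.2 ⟨c, hc, leaves_subset c u huc x hx⟩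
termination_by t => sizeOf t
decreasing_by simp_wf; have := List.sizeOf_lt_of_mem hc; omega

theorem subtrees_trans : ∀ (t s u : Cotree V), s ∈ t.subtrees → u ∈ s.subtrees → u ∈ t.subtrees
  | .leaf v, s, u, hs, hu => by
      rw [mem_subtrees_leaf] at hs ⊢; subst hs; rwa [mem_subtrees_leaf] at hu
  | .node b ts, s, u, hs, hu => by
      rw [mem_subtrees_node] at hs
      rcases hs with rfl | ⟨c, hc, hsc⟩
      · exact hu
      · exact mem_subtrees_node.2 (Or.inr ⟨c, hc, subtrees_trans c s u hsc hu⟩)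
termination_by t => sizeOf t
decreasing_by simp_wf; have := List.sizeOf_lt_of_mem hc; omega

theorem valid_subtree : ∀ (t u : Cotree V), u ∈ t.subtrees → t.valid → u.valid
  | .leaf v, u, hu, hv => by rw [mem_subtrees_leaf] at hu; subst hu; exact hv
  | .node b ts, u, hu, hv => by
      rw [mem_subtrees_node] at hu
      rcases hu with rfl | ⟨c, hc, huc⟩
      · exact hv
      · rw [valid] at hv
        exact valid_subtree c u huc (hv.2 ⟨c, hc⟩ (List.mem_attach _ _)).1
termination_by t => sizeOf t
decreasing_by simp_wf; have := List.sizeOf_lt_of_mem hc; omega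

theorem leaves_nonempty : ∀ (t : Cotree V), t.valid → ∃ x, x ∈ t.leaves
  | .leaf v, _ => ⟨v, by rw [leaves]; simp⟩
  | .node b [], hv => by rw [valid] at hv; simp at hv
  | .node b (c :: rest), hv => by
      rw [valid] at hv
      obtain ⟨x, hx⟩ := leaves_nonempty c (hv.2 ⟨c, by simp⟩ (List.mem_attach _ _)).1
      exact ⟨x, mem_leaves_node.2 ⟨c, by simp, hx⟩⟩
termination_by t => sizeOf t
decreasing_by simp_wf; omega

theorem nodup_child {b : Bool} {ts : List (Cotree V)} (hnd : (Cotree.node b ts).leaves.Nodup)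
    {c : Cotree V} (hc : c ∈ ts) : c.leaves.Nodup := by
  rw [leaves_node_eq, List.nodup_flatMap] at hnd
  exact hnd.1 c hc

theorem disjoint_children {b : Bool} {ts : List (Cotree V)} (hnd : (Cotree.node b ts).leaves.Nodup)
    {c c' : Cotree V} (hc : c ∈ ts) (hc' : c' ∈ ts) (hne : c ≠ c') :
    ∀ x ∈ c.leaves, x ∉ c'.leaves := by
  rw [leaves_node_eq, List.nodup_flatMap] at hnd
  have hsym : Symmetric (Function.onFun List.Disjoint (leaves (V := V))) :=
    fun a b h => List.Disjoint.symm h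
  haveI : Std.Symm (Function.onFun List.Disjoint (leaves (V := V))) := ⟨fun a b h => hsym h⟩
  exact List.Pairwise.forall hnd.2 hc hc' hne

theorem nodup_subtree : ∀ (t u : Cotree V), u ∈ t.subtrees → t.leaves.Nodup → u.leaves.Nodup
  | .leaf v, u, hu, hnd => by rw [mem_subtrees_leaf] at hu; subst hu; exact hnd
  | .node b ts, u, hu, hnd => by
      rw [mem_subtrees_node] at hu
      rcases hu with rfl | ⟨c, hc, huc⟩
      · exact hnd
      · exact nodup_subtree c u huc (nodup_child hnd hc)
termination_by t => sizeOf t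
decreasing_by simp_wf; have := List.sizeOf_lt_of_mem hc; omega

theorem uniform_mono {N : Set V} {t s : Cotree V} (h : uniform N t)
    (hsub : ∀ x ∈ s.leaves, x ∈ t.leaves) : uniform N s := by
  rcases h with h | h
  · exact Or.inl fun v hv => h v (hsub v hv)
  · exact Or.inr fun v hv => h v (hsub v hv)

theorem mixed_exists {N : Set V} {t : Cotree V} (h : mixed N t) :
    (∃ a ∈ t.leaves, a ∈ N) ∧ ∃ b ∈ t.leaves, b ∉ N := by
  rw [mixed, uniform, full, hollow] at h
  push_neg at h
  exact ⟨h.2, h.1⟩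

theorem lca_unique : ∀ (t : Cotree V), t.leaves.Nodup → ∀ (w w' u : Cotree V) (a : V),
    w ∈ t.subtrees → u ∈ w.subtrees → a ∈ w.leaves →
    (∀ c ∈ w.children, ¬(u ∈ c.subtrees ∧ a ∈ c.leaves)) →
    w' ∈ t.subtrees → u ∈ w'.subtrees → a ∈ w'.leaves →
    (∀ c ∈ w'.children, ¬(u ∈ c.subtrees ∧ a ∈ c.leaves)) → w = w'
  | .leaf v, _, w, w', u, a, hw, _, _, _, hw', _, _, _ => by
      rw [mem_subtrees_leaf] at hw hw'; rw [hw, hw']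
  | .node b ts, hnd, w, w', u, a, hw, huw, haw, hmin, hw', huw', haw', hmin' => by
      rw [mem_subtrees_node] at hw hw'
      rcases hw with rfl | ⟨c, hc, hwc⟩
      · rcases hw' with rfl | ⟨c', hc', hwc'⟩
        · rfl
        · exact absurd ⟨subtrees_trans c' w' u hwc' huw',
            leaves_subset c' w' hwc' a haw'⟩ (hmin c' (by simp [children] at *; exact hc'))
      · rcases hw' with rfl | ⟨c', hc', hwc'⟩
        · exact absurd ⟨subtrees_trans c w u hwc huw,
            leaves_subset c w hwc a haw⟩ (hmin' c (by simp [children] at *; exact hc))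
        · by_cases hcc : c = c'
          · subst hcc
            exact lca_unique c (nodup_child hnd hc) w w' u a hwc huw haw hmin hwc' huw' haw' hmin'
          · exact absurd (leaves_subset c' w' hwc' a haw')
              (disjoint_children hnd hc hc' hcc a (leaves_subset c w hwc a haw))
termination_by t => sizeOf t
decreasing_by simp_wf; have := List.sizeOf_lt_of_mem hc; omega

theorem trichotomy : ∀ (t : Cotree V), ∀ u u' : Cotree V, u ∈ t.subtrees → u' ∈ t.subtrees →
    u' ∈ u.subtrees ∨ u ∈ u'.subtrees ∨
      ∃ b ts, (Cotree.node b ts) ∈ t.subtrees ∧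
        ∃ c ∈ ts, ∃ c' ∈ ts, c ≠ c' ∧ u ∈ c.subtrees ∧ u' ∈ c'.subtrees
  | .leaf v, u, u', hu, hu' => by
      rw [mem_subtrees_leaf] at hu hu'
      subst hu; subst hu'
      exact Or.inl (mem_subtrees_self _)
  | .node b ts, u, u', hu, hu' => by
      rw [mem_subtrees_node] at hu hu'
      rcases hu with rfl | ⟨c, hc, huc⟩
      · exact Or.inl (mem_subtrees_node.2 hu')
      · rcases hu' with rfl | ⟨c', hc', huc'⟩
        · exact Or.inr (Or.inl (mem_subtrees_node.2 (Or.inr ⟨c, hc, huc⟩)))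
        · by_cases hcc : c = c'
          · subst hcc
            rcases trichotomy c u u' huc huc' with h | h | ⟨b'', ts'', hw, rest⟩
            · exact Or.inl h
            · exact Or.inr (Or.inl h)
            · exact Or.inr (Or.inr ⟨b'', ts'',
                subtrees_trans _ c _ (mem_subtrees_node.2 (Or.inr ⟨c, hc, mem_subtrees_self c⟩)) hw, rest⟩)
          · exact Or.inr (Or.inr ⟨b, ts, mem_subtrees_self _, c, hc, c', hc', hcc, huc, huc'⟩)
termination_by t => sizeOf t
decreasing_by simp_wf; have := List.sizeOf_lt_of_mem hc; omega

end Cotree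

theorem stmt_7 {V : Type u} (T : Cotree V) (Nx : Set V)
    (hval : T.valid) (hnd : T.leaves.Nodup)
    (hNx : ∀ v ∈ Nx, v ∈ T.leaves) (hmix : Cotree.mixed Nx T)
    (hcog : IsCograph (Cotree.graphPlus T Nx)) :
    ∀ u u' : Cotree V, Cotree.IsInsertionNode T Nx u → Cotree.IsInsertionNode T Nx u' → u = u' := by
  intro u u' hu hu'
  obtain ⟨huT, humix, huch, huy⟩ := hu
  obtain ⟨hu'T, hu'mix, hu'ch, hu'y⟩ := hu'
  rcases Cotree.trichotomy T u u' huT hu'T with h | h | ⟨b, ts, hwT, c, hc, c', hc', hcc, huc, hu'c'⟩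
  · -- u' ∈ u.subtrees
    cases u with
    | leaf v =>
      rw [Cotree.mem_subtrees_leaf] at h
      exact h.symm
    | node bu tsu =>
      rcases Cotree.mem_subtrees_node.1 h with heq | ⟨d, hd, hud⟩
      · exact heq.symm
      · exact absurd (Cotree.uniform_mono (huch d hd) (Cotree.leaves_subset d u' hud)) hu'mix
  · -- u ∈ u'.subtrees
    cases u' with
    | leaf v =>
      rw [Cotree.mem_subtrees_leaf] at h
      exact h
    | node bu tsu =>
      rcases Cotree.mem_subtrees_node.1 h with heq | ⟨d, hd, hud⟩
      · exact heq
      · exact absurd (Cotree.uniform_mono (hu'ch d hd) (Cotree.leaves_subset d u hud)) humix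
  · -- incomparable: common branching node (node b ts)
    exfalso
    have hndw : (Cotree.node b ts).leaves.Nodup := Cotree.nodup_subtree T _ hwT hnd
    have hvalu' : u'.valid := Cotree.valid_subtree T u' hu'T hval
    obtain ⟨z, hz⟩ := Cotree.leaves_nonempty u' hvalu'
    obtain ⟨⟨a, haL, haN⟩, ⟨e, heL, heN⟩⟩ := Cotree.mixed_exists humix
    have key : ∀ y ∈ u.leaves, Cotree.IsLcaNodeLeaf T (Cotree.node b ts) u' y := by
      intro y hy
      refine ⟨hwT, Cotree.mem_subtrees_node.2 (Or.inr ⟨c', hc', hu'c'⟩),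
        Cotree.mem_leaves_node.2 ⟨c, hc, Cotree.leaves_subset c u huc y hy⟩, ?_⟩
      intro d hd hcon
      obtain ⟨hud, hyd⟩ := hcon
      by_cases hdc : d = c
      · subst hdc
        exact Cotree.disjoint_children hndw hd hc' hcc z
          (Cotree.leaves_subset d u' hud z hz)
          (Cotree.leaves_subset c' u' hu'c' z hz)
      · exact Cotree.disjoint_children hndw hd hc hdc y hyd
          (Cotree.leaves_subset c u huc y hy)
    have hdisj : ∀ y ∈ u.leaves, y ∉ u'.leaves := fun y hy hy' =>
      Cotree.disjoint_children hndw hc hc' hcc y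
        (Cotree.leaves_subset c u huc y hy)
        (Cotree.leaves_subset c' u' hu'c' y hy')
    have haT : a ∈ T.leaves := Cotree.leaves_subset T u huT a haL
    have heT : e ∈ T.leaves := Cotree.leaves_subset T u huT e heL
    obtain ⟨w₁, hlca₁, hser₁⟩ := (hu'y a haT (hdisj a haL)).1 haN
    have hkey := key a haL
    have hw₁ : w₁ = Cotree.node b ts :=
      Cotree.lca_unique T hnd w₁ (Cotree.node b ts) u' a
        hlca₁.1 hlca₁.2.1 hlca₁.2.2.1 hlca₁.2.2.2
        hkey.1 hkey.2.1 hkey.2.2.1 hkey.2.2.2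
    rw [hw₁] at hser₁
    exact heN ((hu'y e heT (hdisj e heL)).2 ⟨Cotree.node b ts, key e heL, hser₁⟩)
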